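/- Let n ≥ 1, let Pₙ be the path graph on vertices Δ = {α₁,…,αₙ}, and let J₀ ⊆ Δ. Suppose every connected component of J₀ (in Pₙ) is either a singleton or a connected subset of Δ containing an end node of Pₙ. If X ∈ Λ*(Pₙ,J₀) is an admissible subset with Δ − J₀ ⊆ X, then X is both a right modular and a left modular element of the lattice Λ*(Pₙ,J₀). -/

import Mathlib

open SimpleGraph Finset

/-- `ReachIn G U a b` : `b` is reachable from `a` within the subgraph of `G`
induced on the vertex set `U`. -/
def ReachIn {n : ℕ} (G : SimpleGraph (Fin n)) (U : Finset (Fin n)) (a b : Fin n) : Prop :=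
  Relation.ReflTransGen (fun x y => G.Adj x y ∧ x ∈ U ∧ y ∈ U) a b

/-- `U` is admissible (with respect to `J₀`) if no connected component of the
subgraph of `G` induced on `U` is entirely contained in `J₀`: every component
contains a vertex outside `J₀`. -/
def Admissible {n : ℕ} (G : SimpleGraph (Fin n)) (J₀ U : Finset (Fin n)) : Prop :=
  ∀ a ∈ U, ∃ b, ReachIn G U a b ∧ b ∉ J₀

/-- A subset `A` is connected if the induced subgraph on `A` is connected. -/
def ConnIn {n : ℕ} (G : SimpleGraph (Fin n)) (A : Finset (Fin n)) : Prop :=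
  ∀ a ∈ A, ∀ b ∈ A, ReachIn G A a b

theorem ReachIn.mono {n : ℕ} {G : SimpleGraph (Fin n)} {U V : Finset (Fin n)} (h : U ⊆ V)
    {a b : Fin n} (hr : ReachIn G U a b) : ReachIn G V a b :=
  by
    unfold ReachIn at *
    induction hr with
    | refl => exact Relation.ReflTransGen.refl
    | tail _ hxy ih => exact ih.tail ⟨hxy.1, h hxy.2.1, h hxy.2.2⟩

theorem admissible_empty {n : ℕ} (G : SimpleGraph (Fin n)) (J₀ : Finset (Fin n)) :
    Admissible G J₀ ∅ := fun a ha => absurd ha (Finset.notMem_empty a)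

theorem admissible_union {n : ℕ} {G : SimpleGraph (Fin n)} {J₀ U V : Finset (Fin n)}
    (hU : Admissible G J₀ U) (hV : Admissible G J₀ V) : Admissible G J₀ (U ∪ V) := by
  intro a ha
  rcases Finset.mem_union.mp ha with h | h
  · obtain ⟨b, hb, hbJ⟩ := hU a h
    exact ⟨b, hb.mono Finset.subset_union_left, hbJ⟩
  · obtain ⟨b, hb, hbJ⟩ := hV a h
    exact ⟨b, hb.mono Finset.subset_union_right, hbJ⟩

/-- `Λ*(G, J₀)` : the poset of admissible subsets, ordered by inclusion. -/
def CrossSection {n : ℕ} (G : SimpleGraph (Fin n)) (J₀ : Finset (Fin n)) : Type :=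
  {U : Finset (Fin n) // Admissible G J₀ U}

namespace CrossSection

variable {n : ℕ} {G : SimpleGraph (Fin n)} {J₀ : Finset (Fin n)}

instance : PartialOrder (CrossSection G J₀) :=
  inferInstanceAs (PartialOrder {U : Finset (Fin n) // Admissible G J₀ U})

instance : DecidableEq (CrossSection G J₀) :=
  inferInstanceAs (DecidableEq {U : Finset (Fin n) // Admissible G J₀ U})

noncomputable instance : Fintype (CrossSection G J₀) :=
  Fintype.ofInjective (Subtype.val : CrossSection G J₀ → Finset (Fin n)) Subtype.val_injective

open Classical in
/-- The underlying set of the meet of two admissible sets: the largest admissible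
subset contained in the intersection. -/
noncomputable def meetFinset (G : SimpleGraph (Fin n)) (J₀ : Finset (Fin n))
    (U V : Finset (Fin n)) : Finset (Fin n) :=
  ((U ∩ V).powerset.filter (fun W => Admissible G J₀ W)).sup id

theorem admissible_sup {s : Finset (Finset (Fin n))}
    (h : ∀ W ∈ s, Admissible G J₀ W) : Admissible G J₀ (s.sup id) :=
  Finset.sup_induction (by simpa using admissible_empty G J₀)
    (fun a ha b hb => by simpa using admissible_union ha hb) h

theorem admissible_meetFinset (G : SimpleGraph (Fin n)) (J₀ U V : Finset (Fin n)) :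
    Admissible G J₀ (meetFinset G J₀ U V) := by
  classical
  exact admissible_sup (fun W hW => (Finset.mem_filter.mp hW).2)

theorem meetFinset_subset_left (G : SimpleGraph (Fin n)) (J₀ U V : Finset (Fin n)) :
    meetFinset G J₀ U V ≤ U := by
  classical
  unfold meetFinset
  refine Finset.sup_le (fun W hW => ?_)
  have := Finset.mem_powerset.mp (Finset.mem_filter.mp hW).1
  exact fun x hx => (Finset.mem_inter.mp (this hx)).1

theorem meetFinset_subset_right (G : SimpleGraph (Fin n)) (J₀ U V : Finset (Fin n)) :
    meetFinset G J₀ U V ≤ V := by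
  classical
  unfold meetFinset
  refine Finset.sup_le (fun W hW => ?_)
  have := Finset.mem_powerset.mp (Finset.mem_filter.mp hW).1
  exact fun x hx => (Finset.mem_inter.mp (this hx)).2

theorem subset_meetFinset {G : SimpleGraph (Fin n)} {J₀ U V W : Finset (Fin n)}
    (hW : Admissible G J₀ W) (h1 : W ⊆ U) (h2 : W ⊆ V) : W ≤ meetFinset G J₀ U V := by
  classical
  unfold meetFinset
  exact Finset.le_sup (f := id)
    (Finset.mem_filter.mpr ⟨Finset.mem_powerset.mpr (Finset.subset_inter h1 h2), hW⟩)

noncomputable instance : Lattice (CrossSection G J₀) :=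
  { (inferInstance : PartialOrder (CrossSection G J₀)) with
    sup := fun U V => ⟨U.1 ∪ V.1, admissible_union U.2 V.2⟩
    le_sup_left := fun U V => show U.1 ⊆ U.1 ∪ V.1 from Finset.subset_union_left
    le_sup_right := fun U V => show V.1 ⊆ U.1 ∪ V.1 from Finset.subset_union_right
    sup_le := fun U V W h1 h2 => show U.1 ∪ V.1 ⊆ W.1 from Finset.union_subset h1 h2
    inf := fun U V => ⟨meetFinset G J₀ U.1 V.1, admissible_meetFinset G J₀ U.1 V.1⟩
    inf_le_left := fun U V => meetFinset_subset_left G J₀ U.1 V.1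
    inf_le_right := fun U V => meetFinset_subset_right G J₀ U.1 V.1
    le_inf := fun W U V h1 h2 => subset_meetFinset W.2 h1 h2 }

instance : OrderBot (CrossSection G J₀) where
  bot := ⟨∅, admissible_empty G J₀⟩
  bot_le := fun U => show (∅ : Finset (Fin n)) ⊆ U.1 from Finset.empty_subset _

@[simp] theorem sup_val (U V : CrossSection G J₀) : (U ⊔ V).1 = U.1 ∪ V.1 := rfl

@[simp] theorem inf_val (U V : CrossSection G J₀) : (U ⊓ V).1 = meetFinset G J₀ U.1 V.1 := rfl

end CrossSection

section Aux

variable {n : ℕ} {W J₀ : Finset (Fin n)} {a b : Fin n}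

theorem reachIn_symm {G : SimpleGraph (Fin n)} (h : ReachIn G W a b) : ReachIn G W b a := by
  induction h with
  | refl => exact Relation.ReflTransGen.refl
  | tail _ step ih => exact Relation.ReflTransGen.head ⟨step.1.symm, step.2.2, step.2.1⟩ ih

theorem reachIn_right_mem {G : SimpleGraph (Fin n)} (h : ReachIn G W a b) :
    a = b ∨ b ∈ W := by
  induction h with
  | refl => exact Or.inl rfl
  | tail _ step _ => exact Or.inr step.2.2

/-- Intermediate value: a walk in the path graph from `a` to `b ≥ a` inside `W`
covers the whole interval. -/
theorem path_reach_interval_le (h : ReachIn (pathGraph n) W a b) (ha : a ∈ W) :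
    ∀ c : Fin n, a ≤ c → c ≤ b → c ∈ W := by
  induction h with
  | refl =>
    intro c h1 h2
    have : c = a := le_antisymm h2 h1
    exact this ▸ ha
  | @tail b' b _ step ih =>
    intro c h1 h2
    by_cases hc : c ≤ b'
    · exact ih c h1 hc
    · have hadj := (pathGraph_adj).mp step.1
      have h3 : b'.val < c.val := Fin.lt_def.mp (not_le.mp hc)
      have h4 : c.val ≤ b.val := Fin.le_def.mp h2
      have : c = b := Fin.ext (by omega)
      exact this ▸ step.2.2

theorem path_reach_interval_ge (h : ReachIn (pathGraph n) W a b) (ha : a ∈ W) :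
    ∀ c : Fin n, b ≤ c → c ≤ a → c ∈ W := by
  rcases reachIn_right_mem h with rfl | hb
  · intro c h1 h2; exact (le_antisymm h2 h1) ▸ ha
  · exact path_reach_interval_le (reachIn_symm h) hb

theorem path_reach_of_interval_aux :
    ∀ k, ∀ a b : Fin n, b.val - a.val ≤ k → a ≤ b →
      (∀ c : Fin n, a ≤ c → c ≤ b → c ∈ W) → ReachIn (pathGraph n) W a b := by
  intro k
  induction k with
  | zero =>
    intro a b hk hab _
    have : a = b := Fin.ext (le_antisymm (Fin.le_def.mp hab) (by omega))
    exact this ▸ Relation.ReflTransGen.refl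
  | succ k ih =>
    intro a b hk hab hint
    by_cases hab' : a = b
    · exact hab' ▸ Relation.ReflTransGen.refl
    · have hlt : a.val < b.val := Fin.lt_def.mp (lt_of_le_of_ne hab hab')
      have hbn : b.val < n := b.isLt
      set a' : Fin n := ⟨a.val + 1, by omega⟩ with ha'
      have haa' : a ≤ a' := Fin.le_def.mpr (by simp [ha'])
      have ha'b : a' ≤ b := Fin.le_def.mpr (show a.val + 1 ≤ b.val from hlt)
      have hstep : (pathGraph n).Adj a a' ∧ a ∈ W ∧ a' ∈ W :=
        ⟨pathGraph_adj.mpr (Or.inl rfl), hint a le_rfl hab, hint a' haa' ha'b⟩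
      exact Relation.ReflTransGen.head hstep
        (ih a' b (by simp only [ha']; omega) ha'b
          (fun c h1 h2 => hint c (le_trans haa' h1) h2))

theorem path_reach_of_interval_le (hab : a ≤ b)
    (hint : ∀ c : Fin n, a ≤ c → c ≤ b → c ∈ W) : ReachIn (pathGraph n) W a b :=
  path_reach_of_interval_aux (b.val - a.val) a b le_rfl hab hint

theorem path_reach_of_interval_ge (hab : b ≤ a)
    (hint : ∀ c : Fin n, b ≤ c → c ≤ a → c ∈ W) : ReachIn (pathGraph n) W a b :=
  reachIn_symm (path_reach_of_interval_le hab hint)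

/-- The key combinatorial lemma: under the hypotheses on `J₀`, the intersection of
an admissible set with an admissible set containing the complement of `J₀` is
admissible. -/
theorem inter_admissible (hn : 1 ≤ n)
    (hcomp : ∀ a ∈ J₀, (∀ b, ReachIn (pathGraph n) J₀ a b → b = a) ∨
      ReachIn (pathGraph n) J₀ a ⟨0, hn⟩ ∨
      ReachIn (pathGraph n) J₀ a ⟨n - 1, Nat.sub_lt hn Nat.zero_lt_one⟩)
    {Xf : Finset (Fin n)} (hX : ∀ c : Fin n, c ∉ J₀ → c ∈ Xf)
    (hXadm : Admissible (pathGraph n) J₀ Xf)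
    {Uf : Finset (Fin n)} (hUadm : Admissible (pathGraph n) J₀ Uf) :
    Admissible (pathGraph n) J₀ (Uf ∩ Xf) := by
  intro a ha
  have haU : a ∈ Uf := (Finset.mem_inter.mp ha).1
  have haX : a ∈ Xf := (Finset.mem_inter.mp ha).2
  by_cases haJ : a ∈ J₀
  · rcases hcomp a haJ with hsing | h0 | hn1
    · -- singleton component
      obtain ⟨b, hb, hbJ⟩ := hUadm a haU
      rcases (Relation.ReflTransGen.cases_head hb) with rfl | ⟨c, hstep, _⟩
      · exact absurd haJ hbJ
      · by_cases hcJ : c ∈ J₀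
        · have := hsing c (Relation.ReflTransGen.single ⟨hstep.1, haJ, hcJ⟩)
          exact absurd (this ▸ hstep.1) ((pathGraph n).irrefl)
        · refine ⟨c, Relation.ReflTransGen.single
            ⟨hstep.1, ha, Finset.mem_inter.mpr ⟨hstep.2.2, hX c hcJ⟩⟩, hcJ⟩
    · -- component reaches the left end node: everything ≤ a is in J₀
      have hdown : ∀ c : Fin n, c ≤ a → c ∈ J₀ := fun c hc =>
        path_reach_interval_ge h0 haJ c (Fin.le_def.mpr (by simp)) hc
      obtain ⟨b, hb, hbJ⟩ := hUadm a haU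
      obtain ⟨b', hb', hbJ'⟩ := hXadm a haX
      have hab : a ≤ b := le_of_not_ge fun h => hbJ (hdown b h)
      have hab' : a ≤ b' := le_of_not_ge fun h => hbJ' (hdown b' h)
      have hUint := path_reach_interval_le hb haU
      have hXint := path_reach_interval_le hb' haX
      refine ⟨min b b', path_reach_of_interval_le (le_min hab hab') (fun c h1 h2 =>
        Finset.mem_inter.mpr
          ⟨hUint c h1 (le_trans h2 (min_le_left _ _)),
           hXint c h1 (le_trans h2 (min_le_right _ _))⟩), ?_⟩
      rcases min_cases b b' with ⟨h, _⟩ | ⟨h, _⟩ <;> rw [h] <;> assumption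
    · -- component reaches the right end node: everything ≥ a is in J₀
      have hup : ∀ c : Fin n, a ≤ c → c ∈ J₀ := fun c hc =>
        path_reach_interval_le hn1 haJ c hc (Fin.le_def.mpr (by simp; omega))
      obtain ⟨b, hb, hbJ⟩ := hUadm a haU
      obtain ⟨b', hb', hbJ'⟩ := hXadm a haX
      have hab : b ≤ a := le_of_not_ge fun h => hbJ (hup b h)
      have hab' : b' ≤ a := le_of_not_ge fun h => hbJ' (hup b' h)
      have hUint := path_reach_interval_ge hb haU
      have hXint := path_reach_interval_ge hb' haX
      refine ⟨max b b', path_reach_of_interval_ge (max_le hab hab') (fun c h1 h2 =>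
        Finset.mem_inter.mpr
          ⟨hUint c (le_trans (le_max_left _ _) h1) h2,
           hXint c (le_trans (le_max_right _ _) h1) h2⟩), ?_⟩
      rcases max_cases b b' with ⟨h, _⟩ | ⟨h, _⟩ <;> rw [h] <;> assumption
  · exact ⟨a, Relation.ReflTransGen.refl, haJ⟩

theorem meetFinset_eq_inter {G : SimpleGraph (Fin n)} {A B : Finset (Fin n)}
    (h : Admissible G J₀ (A ∩ B)) :
    CrossSection.meetFinset G J₀ A B = A ∩ B := by
  apply le_antisymm
  · exact fun x hx => Finset.mem_inter.mpr
      ⟨CrossSection.meetFinset_subset_left G J₀ A B hx,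
       CrossSection.meetFinset_subset_right G J₀ A B hx⟩
  · exact CrossSection.subset_meetFinset h Finset.inter_subset_left Finset.inter_subset_right

end Aux

theorem stmt_15 (n : ℕ) (hn : 1 ≤ n) (J₀ : Finset (Fin n))
    (hcomp : ∀ a ∈ J₀, (∀ b, ReachIn (pathGraph n) J₀ a b → b = a) ∨
      ReachIn (pathGraph n) J₀ a ⟨0, by omega⟩ ∨
      ReachIn (pathGraph n) J₀ a ⟨n - 1, by omega⟩)
    (X : CrossSection (pathGraph n) J₀) (hX : Finset.univ \ J₀ ⊆ X.1) :
    (∀ U V : CrossSection (pathGraph n) J₀, V ≤ X → V ⊔ (U ⊓ X) = (V ⊔ U) ⊓ X) ∧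
    (∀ U V : CrossSection (pathGraph n) J₀, U ≤ V → U ⊔ (X ⊓ V) = (U ⊔ X) ⊓ V) := by
  have hX' : ∀ c : Fin n, c ∉ J₀ → c ∈ X.1 := fun c hc =>
    hX (Finset.mem_sdiff.mpr ⟨Finset.mem_univ c, hc⟩)
  -- meets with X on either side are plain intersections
  have key : ∀ Uf : Finset (Fin n), Admissible (pathGraph n) J₀ Uf →
      Admissible (pathGraph n) J₀ (Uf ∩ X.1) :=
    fun Uf hU => inter_admissible hn hcomp hX' X.2 hU
  constructor
  · intro U V hVX
    apply Subtype.ext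
    show V.1 ∪ CrossSection.meetFinset _ J₀ U.1 X.1
        = CrossSection.meetFinset _ J₀ (V.1 ∪ U.1) X.1
    rw [meetFinset_eq_inter (key U.1 U.2),
      meetFinset_eq_inter (key (V.1 ∪ U.1) (admissible_union V.2 U.2))]
    have hVX' : V.1 ⊆ X.1 := hVX
    ext x
    simp only [Finset.mem_union, Finset.mem_inter]
    constructor
    · rintro (h | ⟨h1, h2⟩)
      · exact ⟨Or.inl h, hVX' h⟩
      · exact ⟨Or.inr h1, h2⟩
    · rintro ⟨h | h, h2⟩
      · exact Or.inl h
      · exact Or.inr ⟨h, h2⟩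
  · intro U V hUV
    apply Subtype.ext
    show U.1 ∪ CrossSection.meetFinset _ J₀ X.1 V.1
        = CrossSection.meetFinset _ J₀ (U.1 ∪ X.1) V.1
    have hUV' : U.1 ⊆ V.1 := hUV
    have hXV : Admissible (pathGraph n) J₀ (X.1 ∩ V.1) := by
      rw [Finset.inter_comm]; exact key V.1 V.2
    have heq : (U.1 ∪ X.1) ∩ V.1 = U.1 ∪ (X.1 ∩ V.1) := by
      ext x
      simp only [Finset.mem_union, Finset.mem_inter]
      constructor
      · rintro ⟨h | h, h2⟩
        · exact Or.inl h
        · exact Or.inr ⟨h, h2⟩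
      · rintro (h | ⟨h1, h2⟩)
        · exact ⟨Or.inl h, hUV' h⟩
        · exact ⟨Or.inr h1, h2⟩
    have hadm : Admissible (pathGraph n) J₀ ((U.1 ∪ X.1) ∩ V.1) := by
      rw [heq]; exact admissible_union U.2 hXV
    rw [meetFinset_eq_inter hXV, meetFinset_eq_inter hadm, heq]
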